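/- The vector v̄ with components v̄_ℓ = 1 + (A^ℓ - A)/(K A^N) for 1 ≤ ℓ ≤ M satisfies B v̄ = 0, where A = 1+K. -/

import Mathlib

/-- The action of the linearization matrix `B` on a vector, indexed by `1, …, M = N+1`. -/
noncomputable def applyB (K : ℝ) (N : ℕ) (V : ℕ → ℂ) (ℓ : ℕ) : ℂ :=
  if ℓ = 1 then
    -((K : ℂ) + 1) * ((N : ℂ) + 3) * V 1 + V 2 - (K : ℂ) * ∑ j ∈ Finset.Icc 2 N, V j
      + (((N : ℂ) + 1) * (K : ℂ) + 1) * V (N + 1)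
  else if ℓ = N + 1 then
    ((K : ℂ) + 1) * (V 1 + V N - V (N + 1))
  else if 2 ≤ ℓ ∧ ℓ ≤ N then
    (K : ℂ) * (V (ℓ - 1) - V ℓ) + (V (ℓ - 1) - 2 * V ℓ + V (ℓ + 1))
  else 0

lemma geom_Icc (x : ℂ) : ∀ N, 1 ≤ N →
    (x - 1) * ∑ j ∈ Finset.Icc 2 N, x ^ j = x ^ (N + 1) - x ^ 2 := by
  intro N hN
  induction N with
  | zero => omega
  | succ n ih =>
    rcases Nat.lt_or_ge n 1 with h | h
    · interval_cases n
      · simp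
    · rw [Finset.sum_Icc_succ_top (by omega : 2 ≤ n + 1), mul_add, ih h]
      ring

/-- The vector `v̄_ℓ = 1 + (A^ℓ - A)/(K A^N)` is a right null vector of `B`. -/
theorem right_null_vector (N : ℕ) (hN : 2 ≤ N) (K A : ℝ) (hK : 0 < K) (hA : A = 1 + K)
    (vbar : ℕ → ℂ)
    (hv : ∀ ℓ, vbar ℓ = 1 + ((A : ℂ) ^ ℓ - (A : ℂ)) / ((K : ℂ) * (A : ℂ) ^ N)) :
    ∀ ℓ ∈ Finset.Icc 1 (N + 1), applyB K N vbar ℓ = 0 := by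
  intro ℓ hℓ
  simp only [Finset.mem_Icc] at hℓ
  have hK0 : (K : ℂ) ≠ 0 := by exact_mod_cast hK.ne'
  have hA0 : (0:ℝ) < A := by rw [hA]; linarith
  have hAne : (A : ℂ) ≠ 0 := by exact_mod_cast hA0.ne'
  have hKA : (K : ℂ) = (A : ℂ) - 1 := by
    have : (A : ℂ) = 1 + (K : ℂ) := by exact_mod_cast congrArg (Complex.ofReal) hA
    rw [this]; ring
  set a : ℂ := (A : ℂ)
  have hane : a ≠ 0 := hAne
  by_cases h1 : ℓ = 1
  · subst h1
    rw [applyB, if_pos rfl]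
    have hsum : ∑ j ∈ Finset.Icc 2 N, vbar j
        = (N : ℂ) - 1 + ((∑ j ∈ Finset.Icc 2 N, a ^ j) - ((N : ℂ) - 1) * a) / ((K : ℂ) * a ^ N) := by
      rw [Finset.sum_congr rfl (fun j _ => hv j)]
      rw [Finset.sum_add_distrib, Finset.sum_const, Nat.card_Icc]
      rw [← Finset.sum_div, Finset.sum_sub_distrib, Finset.sum_const, Nat.card_Icc]
      have hc : ((N + 1 - 2 : ℕ) : ℂ) = (N : ℂ) - 1 := by
        have h' : N + 1 - 2 = N - 1 := by omega
        rw [h']; push_cast [Nat.cast_sub (by omega : 1 ≤ N)]; ring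
      simp only [nsmul_eq_mul, hc, smul_eq_mul]
      ring
    rw [hsum, hv 1, hv 2, hv (N+1)]
    have hS := geom_Icc a N (by omega)
    set S := ∑ j ∈ Finset.Icc 2 N, a ^ j
    simp only [hKA]
    have ha1 : a - 1 ≠ 0 := by rw [← hKA]; exact hK0
    field_simp
    linear_combination -hS
  · by_cases hM : ℓ = N + 1
    · subst hM
      rw [applyB, if_neg h1, if_pos rfl]
      rw [hv 1, hv N, hv (N+1)]
      rw [hKA]
      have ha1 : a - 1 ≠ 0 := by rw [← hKA]; exact hK0
      field_simp
      ring
    · have h2 : 2 ≤ ℓ ∧ ℓ ≤ N := by omega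
      rw [applyB, if_neg h1, if_neg hM, if_pos h2]
      obtain ⟨m, rfl⟩ : ∃ m, ℓ = m + 2 := ⟨ℓ - 2, by omega⟩
      rw [hv (m + 2 - 1), hv (m + 2), hv (m + 2 + 1)]
      have : m + 2 - 1 = m + 1 := rfl
      rw [this, hKA]
      have ha1 : a - 1 ≠ 0 := by rw [← hKA]; exact hK0
      field_simp
      ring
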